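/- arXiv:2208.01484 — 2 statements merged into one kernel-verified Lean document; each statement's English description precedes it below -/
import Mathlib

section
/- For all n ≥ 0, the number of Fishburn permutations of length n which avoid both 321 and 1423 is |F_n(321, 1423)| = F_{n+2} − n − 1, where F_m denotes the Fibonacci numbers with F_0 = F_1 = 1 and F_m = F_{m−1} + F_{m−2} for m ≥ 2. -/
/-- Two lists of naturals have the same length and the same relative order
(including ties). -/
def SameRelOrder (u v : List ℕ) : Prop :=
  u.length = v.length ∧
    ∀ i j, i < u.length → j < u.length →
      (u.getD i 0 < u.getD j 0 ↔ v.getD i 0 < v.getD j 0)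

/-- `α` contains `β` as a pattern: some subsequence of `α` has the same length
and relative order as `β`. -/
def SeqContains (α β : List ℕ) : Prop :=
  ∃ γ : List ℕ, γ.Sublist α ∧ SameRelOrder γ β

/-- A copy of the Fishburn pattern `f` in `l`: indices `j`, `k` with `j + 1 < k`,
`l j = l k + 1` and `l (j+1) > l j`. -/
def HasFishburnCopy (l : List ℕ) : Prop :=
  ∃ j k, j + 1 < k ∧ k < l.length ∧
    l.getD j 0 = l.getD k 0 + 1 ∧ l.getD j 0 < l.getD (j + 1) 0

/-- A Fishburn permutation contains no copy of the Fishburn pattern `f`. -/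
def FishburnFree (l : List ℕ) : Prop := ¬ HasFishburnCopy l

/-- `l` is a permutation of `1, …, n`, written in one-line notation. -/
def IsPermList (n : ℕ) (l : List ℕ) : Prop := l.Perm (List.range' 1 n)

/-- The set of Fishburn permutations of length `n` avoiding each pattern in `pats`. -/
def FishburnSet (n : ℕ) (pats : List (List ℕ)) : Set (List ℕ) :=
  {l | IsPermList n l ∧ FishburnFree l ∧ ∀ p ∈ pats, ¬ SeqContains l p}

/-- The set of all permutations of length `n` avoiding each pattern in `pats`. -/
def PermSet (n : ℕ) (pats : List (List ℕ)) : Set (List ℕ) :=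
  {l | IsPermList n l ∧ ∀ p ∈ pats, ¬ SeqContains l p}

/-- The number of ascents of a sequence. -/
def ascCount (l : List ℕ) : ℕ :=
  ((Finset.range l.length).filter
    (fun i => i + 1 < l.length ∧ l.getD i 0 < l.getD (i + 1) 0)).card

/-- `l` is an ascent sequence. -/
def IsAscentSeq (l : List ℕ) : Prop :=
  (0 < l.length → l.getD 0 0 = 0) ∧
    ∀ j, 0 < j → j < l.length → l.getD j 0 ≤ 1 + ascCount (l.take j)

/-- The set of ascent sequences of length `n` avoiding each pattern in `pats`. -/
def AscentSeqSet (n : ℕ) (pats : List (List ℕ)) : Set (List ℕ) :=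
  {l | l.length = n ∧ IsAscentSeq l ∧ ∀ p ∈ pats, ¬ SeqContains l p}

/-- The Fibonacci numbers, indexed so that `F_0 = F_1 = 1`. -/
def paperFib : ℕ → ℕ
  | 0 => 1
  | 1 => 1
  | m + 2 => paperFib (m + 1) + paperFib m

/-- occurrence of 321 by indices -/
def Occ321 (l : List ℕ) : Prop :=
  ∃ i j k, i < j ∧ j < k ∧ k < l.length ∧
    l.getD k 0 < l.getD j 0 ∧ l.getD j 0 < l.getD i 0

def Occ1423 (l : List ℕ) : Prop :=
  ∃ i j k m, i < j ∧ j < k ∧ k < m ∧ m < l.length ∧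
    l.getD i 0 < l.getD k 0 ∧ l.getD k 0 < l.getD m 0 ∧ l.getD m 0 < l.getD j 0

lemma sublist_of_indices2 {l : List ℕ} {i j : ℕ} (hij : i < j) (hj : j < l.length) :
    [l.getD i 0, l.getD j 0].Sublist l := by
  have hi : i < l.length := lt_trans hij hj
  have := List.map_getElem_sublist (l := l) (is := [⟨i, hi⟩, ⟨j, hj⟩]) (by
    simp [List.pairwise_cons, hij])
  rw [List.getD_eq_getElem (hn := hi), List.getD_eq_getElem (hn := hj)]
  simpa using this

lemma sublist_of_indices3 {l : List ℕ} {i j k : ℕ} (hij : i < j) (hjk : j < k)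
    (hk : k < l.length) : [l.getD i 0, l.getD j 0, l.getD k 0].Sublist l := by
  have hj : j < l.length := lt_trans hjk hk
  have hi : i < l.length := lt_trans hij hj
  have := List.map_getElem_sublist (l := l) (is := [⟨i, hi⟩, ⟨j, hj⟩, ⟨k, hk⟩]) (by
    simp [List.pairwise_cons, hij, hjk, lt_trans hij hjk])
  rw [List.getD_eq_getElem (hn := hi), List.getD_eq_getElem (hn := hj),
    List.getD_eq_getElem (hn := hk)]
  simpa using this

lemma sublist_of_indices4 {l : List ℕ} {i j k m : ℕ} (hij : i < j) (hjk : j < k)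
    (hkm : k < m) (hm : m < l.length) :
    [l.getD i 0, l.getD j 0, l.getD k 0, l.getD m 0].Sublist l := by
  have hk : k < l.length := lt_trans hkm hm
  have hj : j < l.length := lt_trans hjk hk
  have hi : i < l.length := lt_trans hij hj
  have := List.map_getElem_sublist (l := l) (is := [⟨i, hi⟩, ⟨j, hj⟩, ⟨k, hk⟩, ⟨m, hm⟩]) (by
    simp [List.pairwise_cons]
    omega)
  rw [List.getD_eq_getElem (hn := hi), List.getD_eq_getElem (hn := hj),
    List.getD_eq_getElem (hn := hk), List.getD_eq_getElem (hn := hm)]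
  simpa using this

lemma seqContains_321_iff (l : List ℕ) : SeqContains l [3,2,1] ↔ Occ321 l := by
  constructor
  · rintro ⟨γ, hsub, hlen, hrel⟩
    simp at hlen
    obtain ⟨a, b, c, rfl⟩ := List.length_eq_three.mp hlen
    have h01 := hrel 1 0 (by simp) (by simp)
    have h12 := hrel 2 1 (by simp) (by simp)
    simp [List.getD_cons_zero, List.getD_cons_succ] at h01 h12
    -- b < a, c < b
    obtain ⟨is, hmap, hpw⟩ := List.sublist_eq_map_getElem hsub
    obtain ⟨x, y, z, rfl⟩ := List.length_eq_three.mp (by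
      have := congrArg List.length hmap; simpa using this.symm)
    simp [List.pairwise_cons] at hpw
    simp at hmap
    obtain ⟨ha, hb, hc⟩ := hmap
    refine ⟨x, y, z, hpw.1.1, hpw.2, z.isLt, ?_, ?_⟩
    · rw [List.getD_eq_getElem (hn := z.isLt), List.getD_eq_getElem (hn := y.isLt),
        ← hb, ← hc]
      omega
    · rw [List.getD_eq_getElem (hn := y.isLt), List.getD_eq_getElem (hn := x.isLt),
        ← ha, ← hb]
      omega
  · rintro ⟨i, j, k, hij, hjk, hk, h1, h2⟩
    refine ⟨[l.getD i 0, l.getD j 0, l.getD k 0], sublist_of_indices3 hij hjk hk, by simp, ?_⟩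
    intro a b ha hb
    simp at ha hb
    interval_cases a <;> interval_cases b <;>
      simp only [List.getD_cons_zero, List.getD_cons_succ] <;> omega

lemma length_eq_four' {α : Type*} {l : List α} (h : l.length = 4) : ∃ a b c d, l = [a,b,c,d] := by
  match l, h with
  | [a,b,c,d], _ => exact ⟨a,b,c,d, rfl⟩

lemma seqContains_1423_iff (l : List ℕ) : SeqContains l [1,4,2,3] ↔ Occ1423 l := by
  constructor
  · rintro ⟨γ, hsub, hlen, hrel⟩
    simp at hlen
    obtain ⟨a, b, c, d, rfl⟩ := length_eq_four' hlen
    have h01 := hrel 0 1 (by simp) (by simp)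
    have h21 := hrel 2 1 (by simp) (by simp)
    have h23 := hrel 2 3 (by simp) (by simp)
    have h31 := hrel 3 1 (by simp) (by simp)
    have h02 := hrel 0 2 (by simp) (by simp)
    simp only [List.getD_cons_zero, List.getD_cons_succ] at h01 h21 h23 h31 h02
    norm_num at h01 h21 h23 h31 h02
    obtain ⟨is, hmap, hpw⟩ := List.sublist_eq_map_getElem hsub
    obtain ⟨x, y, z, w, rfl⟩ := length_eq_four' (l := is) (by
      have := congrArg List.length hmap; simpa using this.symm)
    simp [List.pairwise_cons] at hpw
    simp at hmap
    obtain ⟨ha, hb, hc, hd⟩ := hmap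
    obtain ⟨⟨hxy, hxz, hxw⟩, ⟨hyz, hyw⟩, hzw⟩ := hpw
    refine ⟨x, y, z, w, hxy, hyz, hzw, w.isLt, ?_, ?_, ?_⟩
    · rw [List.getD_eq_getElem (hn := x.isLt), List.getD_eq_getElem (hn := z.isLt),
        ← ha, ← hc]
      omega
    · rw [List.getD_eq_getElem (hn := z.isLt), List.getD_eq_getElem (hn := w.isLt),
        ← hc, ← hd]
      omega
    · rw [List.getD_eq_getElem (hn := w.isLt), List.getD_eq_getElem (hn := y.isLt),
        ← hb, ← hd]
      omega
  · rintro ⟨i, j, k, m, hij, hjk, hkm, hm, h1, h2, h3⟩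
    refine ⟨[l.getD i 0, l.getD j 0, l.getD k 0, l.getD m 0],
      sublist_of_indices4 hij hjk hkm hm, by simp, ?_⟩
    intro a b ha hb
    simp at ha hb
    interval_cases a <;> interval_cases b <;>
      simp only [List.getD_cons_zero, List.getD_cons_succ] <;> omega

def Good (n : ℕ) (l : List ℕ) : Prop :=
  IsPermList n l ∧ FishburnFree l ∧ ¬ Occ321 l ∧ ¬ Occ1423 l

lemma Good.length {n l} (h : Good n l) : l.length = n := by
  have := h.1.length_eq; simpa using this

lemma Good.mem_iff {n l} (h : Good n l) : ∀ x, x ∈ l ↔ 1 ≤ x ∧ x ≤ n := by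
  intro x
  rw [h.1.mem_iff, List.mem_range'_1]
  omega

lemma Good.nodup {n l} (h : Good n l) : l.Nodup :=
  h.1.nodup_iff.mpr (List.nodup_range' (s := 1) (n := n))

-- value at a position, within bounds
lemma Good.getD_bound {n l} (h : Good n l) {i : ℕ} (hi : i < n) :
    1 ≤ l.getD i 0 ∧ l.getD i 0 ≤ n := by
  have hi' : i < l.length := by rw [h.length]; exact hi
  rw [List.getD_eq_getElem (hn := hi')]
  exact (h.mem_iff _).mp (l.getElem_mem hi')

lemma Good.getD_inj {n l} (h : Good n l) {i j : ℕ} (hi : i < n) (hj : j < n)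
    (hij : l.getD i 0 = l.getD j 0) : i = j := by
  have hi' : i < l.length := by rw [h.length]; exact hi
  have hj' : j < l.length := by rw [h.length]; exact hj
  rw [List.getD_eq_getElem (hn := hi'), List.getD_eq_getElem (hn := hj')] at hij
  exact (h.nodup.getElem_inj_iff).mp hij

/-- index of a value -/
lemma Good.exists_index {n l} (h : Good n l) {x : ℕ} (h1 : 1 ≤ x) (h2 : x ≤ n) :
    ∃ i, i < n ∧ l.getD i 0 = x := by
  have hx : x ∈ l := (h.mem_iff x).mpr ⟨h1, h2⟩
  have hlt : l.idxOf x < l.length := List.idxOf_lt_length_iff.mpr hx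
  refine ⟨l.idxOf x, by rw [← h.length]; exact hlt, ?_⟩
  rw [List.getD_eq_getElem (hn := hlt)]
  exact List.getElem_idxOf hlt

lemma getD_append_lt (l t : List ℕ) {i : ℕ} (hi : i < l.length) :
    (l ++ t).getD i 0 = l.getD i 0 := by
  rw [List.getD_eq_getElem?_getD, List.getD_eq_getElem?_getD,
    List.getElem?_append, if_pos hi]

lemma getD_append_ge (l t : List ℕ) {i : ℕ} (hi : l.length ≤ i) :
    (l ++ t).getD i 0 = t.getD (i - l.length) 0 := by
  rw [List.getD_eq_getElem?_getD, List.getD_eq_getElem?_getD,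
    List.getElem?_append_right hi]

lemma getD_take (l : List ℕ) {i m : ℕ} (hi : i < m) :
    (l.take m).getD i 0 = l.getD i 0 := by
  rw [List.getD_eq_getElem?_getD, List.getD_eq_getElem?_getD, List.getElem?_take, if_pos hi]

lemma good_append_one {n : ℕ} {l : List ℕ} (h : Good n l) : Good (n + 1) (l ++ [n + 1]) := by
  have hlen : l.length = n := h.length
  have hbound : ∀ i, i < n → l.getD i 0 ≤ n := fun i hi => (h.getD_bound hi).2
  have hget : ∀ i, i < n → (l ++ [n+1]).getD i 0 = l.getD i 0 := by
    intro i hi; exact getD_append_lt l _ (by omega)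
  have hlast : (l ++ [n+1]).getD n 0 = n + 1 := by
    rw [getD_append_ge l _ (by omega)]; simp [hlen]
  have hlen' : (l ++ [n+1]).length = n + 1 := by simp [hlen]
  refine ⟨?_, ?_, ?_, ?_⟩
  · unfold IsPermList
    rw [List.range'_concat]
    have : 1 + 1 * n = n + 1 := by omega
    rw [this]
    exact h.1.append (List.Perm.refl [n+1])
  · rintro ⟨j, k, hjk, hk, h1, h2⟩
    rw [hlen'] at hk
    rcases Nat.lt_or_ge k n with hkn | hkn
    · exact h.2.1 ⟨j, k, hjk, by omega,
        by rw [← hget j (by omega), ← hget k (by omega)]; exact h1,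
        by rw [← hget j (by omega), ← hget (j+1) (by omega)]; exact h2⟩
    · have hk' : k = n := by omega
      subst hk'
      rw [hlast] at h1
      rw [hget j (by omega)] at h1
      have := hbound j (by omega); omega
  · rintro ⟨i, j, k, hij, hjk, hk, h1, h2⟩
    rw [hlen'] at hk
    rcases Nat.lt_or_ge k n with hkn | hkn
    · exact h.2.2.1 ⟨i, j, k, hij, hjk, by omega,
        by rw [← hget j (by omega), ← hget k (by omega)]; exact h1,
        by rw [← hget i (by omega), ← hget j (by omega)]; exact h2⟩
    · have hk' : k = n := by omega
      subst hk'
      rw [hlast] at h1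
      rw [hget j (by omega)] at h1
      have := hbound j (by omega); omega
  · rintro ⟨i, j, k, m, hij, hjk, hkm, hm, h1, h2, h3⟩
    rw [hlen'] at hm
    rcases Nat.lt_or_ge m n with hmn | hmn
    · exact h.2.2.2 ⟨i, j, k, m, hij, hjk, hkm, by omega,
        by rw [← hget i (by omega), ← hget k (by omega)]; exact h1,
        by rw [← hget k (by omega), ← hget m (by omega)]; exact h2,
        by rw [← hget m (by omega), ← hget j (by omega)]; exact h3⟩
    · have hm' : m = n := by omega
      subst hm'
      rw [hlast] at h3
      rw [hget j (by omega)] at h3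
      have := hbound j (by omega); omega

lemma good_append_two {n : ℕ} {l : List ℕ} (h : Good n l) :
    Good (n + 2) (l ++ [n + 2, n + 1]) := by
  have hlen : l.length = n := h.length
  have hbound : ∀ i, i < n → l.getD i 0 ≤ n := fun i hi => (h.getD_bound hi).2
  have hget : ∀ i, i < n → (l ++ [n+2, n+1]).getD i 0 = l.getD i 0 := by
    intro i hi; exact getD_append_lt l _ (by omega)
  have hg1 : (l ++ [n+2, n+1]).getD n 0 = n + 2 := by
    rw [getD_append_ge l _ (by omega)]; simp [hlen]
  have hg2 : (l ++ [n+2, n+1]).getD (n+1) 0 = n + 1 := by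
    rw [getD_append_ge l _ (by omega)]; simp [hlen]
  have hlen' : (l ++ [n+2, n+1]).length = n + 2 := by simp [hlen]
  refine ⟨?_, ?_, ?_, ?_⟩
  · unfold IsPermList
    have h1 : List.range' 1 (n+2) = List.range' 1 n ++ [n+1, n+2] := by
      rw [List.range'_concat, List.range'_concat]
      have e1 : 1 + 1 * (n + 1) = n + 2 := by omega
      have e2 : 1 + 1 * n = n + 1 := by omega
      rw [e1, e2, List.append_assoc]
      rfl
    rw [h1]
    refine (h.1.append ?_).trans (List.Perm.refl _)
    exact List.Perm.swap _ _ _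
  · rintro ⟨j, k, hjk, hk, h1, h2⟩
    rw [hlen'] at hk
    have hvj : (l ++ [n+2,n+1]).getD j 0 ≤ n + 2 := by
      rcases Nat.lt_or_ge j n with hj | hj
      · rw [hget j hj]; have := hbound j hj; omega
      · rcases Nat.lt_or_ge j (n+2) with hj2 | hj2
        · rcases (by omega : j = n ∨ j = n + 1) with rfl | rfl
          · rw [hg1]
          · rw [hg2]; omega
        · rw [List.getD_eq_getElem?_getD, List.getElem?_eq_none (by rw [hlen']; omega)]
          simp
    rcases Nat.lt_or_ge k n with hkn | hkn
    · exact h.2.1 ⟨j, k, hjk, by omega,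
        by rw [← hget j (by omega), ← hget k (by omega)]; exact h1,
        by rw [← hget j (by omega), ← hget (j+1) (by omega)]; exact h2⟩
    · rcases (by omega : k = n ∨ k = n + 1) with rfl | rfl
      · -- k = n, value n+2, so getD j = n+3 > n+2 impossible
        rw [hg1] at h1; omega
      · -- k = n+1, value n+1, so getD j = n+2, so j = n but j+1 < n+1 fails
        rw [hg2] at h1
        have hj : j < n := by omega
        rw [hget j hj] at h1
        have := hbound j hj; omega
  · rintro ⟨i, j, k, hij, hjk, hk, h1, h2⟩
    rw [hlen'] at hk
    rcases Nat.lt_or_ge k n with hkn | hkn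
    · exact h.2.2.1 ⟨i, j, k, hij, hjk, by omega,
        by rw [← hget j (by omega), ← hget k (by omega)]; exact h1,
        by rw [← hget i (by omega), ← hget j (by omega)]; exact h2⟩
    · rcases (by omega : k = n ∨ k = n + 1) with rfl | rfl
      · -- value n+2 at k; need getD j > n+2 with j < n
        rw [hg1] at h1
        rw [hget j (by omega)] at h1
        have := hbound j (by omega); omega
      · -- k = n+1, value n+1; need getD j > n+1: j ≤ n: if j = n: getD i > n+2 impossible
        rw [hg2] at h1
        rcases Nat.lt_or_ge j n with hj | hj
        · rw [hget j hj] at h1; have := hbound j hj; omega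
        · have hj' : j = n := by omega
          subst hj'
          rw [hg1] at h1 h2
          rw [hget i (by omega)] at h2
          have := hbound i (by omega); omega
  · rintro ⟨i, j, k, m, hij, hjk, hkm, hm, h1, h2, h3⟩
    rw [hlen'] at hm
    rcases Nat.lt_or_ge m n with hmn | hmn
    · exact h.2.2.2 ⟨i, j, k, m, hij, hjk, hkm, by omega,
        by rw [← hget i (by omega), ← hget k (by omega)]; exact h1,
        by rw [← hget k (by omega), ← hget m (by omega)]; exact h2,
        by rw [← hget m (by omega), ← hget j (by omega)]; exact h3⟩
    · rcases (by omega : m = n ∨ m = n + 1) with rfl | rfl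
      · -- m = n: value n+2 < getD j: impossible
        rw [hg1] at h3
        rw [hget j (by omega)] at h3
        have := hbound j (by omega); omega
      · -- m = n+1: value n+1 < getD j, j < n impossible unless j = n, but then k in between
        rw [hg2] at h3
        rcases Nat.lt_or_ge j n with hj | hj
        · rw [hget j hj] at h3; have := hbound j hj; omega
        · omega

/-- value of the special permutation σ_{k,n} at position i:
σ = k, 1, 2, ..., k-2, k+1, ..., n, k-1 -/
def sigf (k n i : ℕ) : ℕ :=
  if i = 0 then k else if i + 2 ≤ k then i else if i + 2 ≤ n then i + 2 else k - 1

def sig (k n : ℕ) : List ℕ := (List.range n).map (sigf k n)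

lemma sig_length (k n : ℕ) : (sig k n).length = n := by simp [sig]

lemma sig_getD {k n i : ℕ} (hi : i < n) : (sig k n).getD i 0 = sigf k n i := by
  rw [List.getD_eq_getElem (hn := by simp [sig, hi])]
  simp [sig]

set_option maxHeartbeats 2000000 in
lemma sig_good {k n : ℕ} (hk3 : 3 ≤ k) (hkn : k ≤ n) : Good n (sig k n) := by
  have hb : ∀ i, i < n → 1 ≤ sigf k n i ∧ sigf k n i ≤ n := by
    intro i hi; simp only [sigf]; split_ifs <;> first | contradiction | omega
  refine ⟨?_, ?_, ?_, ?_⟩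
  · unfold IsPermList
    have hnd : (sig k n).Nodup := by
      refine List.Nodup.map_on ?_ (List.nodup_range (n := n))
      intro i hi j hj hij
      simp only [List.mem_range] at hi hj
      simp only [sigf] at hij
      split_ifs at hij <;> omega
    have hsub : sig k n ⊆ List.range' 1 n := by
      intro x hx
      simp only [sig, List.mem_map, List.mem_range] at hx
      obtain ⟨i, hi, rfl⟩ := hx
      rw [List.mem_range'_1]
      have := hb i hi; omega
    exact (hnd.subperm hsub).perm_of_length_le (by simp [sig])
  · rintro ⟨j, k', hjk, hk', h1, h2⟩
    rw [sig_length] at hk'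
    rw [sig_getD (by omega), sig_getD (by omega)] at h1
    rw [sig_getD (by omega), sig_getD (by omega)] at h2
    simp only [sigf] at h1 h2
    split_ifs at h1 h2 <;> omega
  · rintro ⟨i, j, k', hij, hjk, hk', h1, h2⟩
    rw [sig_length] at hk'
    rw [sig_getD (by omega), sig_getD (by omega)] at h1
    rw [sig_getD (by omega), sig_getD (by omega)] at h2
    simp only [sigf] at h1 h2
    split_ifs at h1 h2 <;> omega
  · rintro ⟨i, j, k', m, hij, hjk, hkm, hm, h1, h2, h3⟩
    rw [sig_length] at hm
    rw [sig_getD (by omega), sig_getD (by omega)] at h1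
    rw [sig_getD (by omega), sig_getD (by omega)] at h2
    rw [sig_getD (by omega), sig_getD (by omega)] at h3
    simp only [sigf] at h1 h2 h3
    split_ifs at h1 h2 h3 <;> omega

lemma perm_append_cancel {l₁ l₂ t : List ℕ} (h : (l₁ ++ t).Perm (l₂ ++ t)) : l₁.Perm l₂ := by
  rw [List.perm_iff_count] at h ⊢
  intro a
  have := h a
  simp only [List.count_append] at this
  omega

lemma good_of_take {m : ℕ} {l : List ℕ} (h : FishburnFree l ∧ ¬ Occ321 l ∧ ¬ Occ1423 l)
    (hperm : IsPermList m (l.take m)) (hm : m ≤ l.length) :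
    Good m (l.take m) := by
  have hlt : (l.take m).length = m := by simp [List.length_take]; omega
  refine ⟨hperm, ?_, ?_, ?_⟩
  · rintro ⟨j, k, hjk, hk, h1, h2⟩
    rw [hlt] at hk
    rw [getD_take l (by omega), getD_take l (by omega)] at h1
    rw [getD_take l (by omega)] at h2
    rw [getD_take l (by omega)] at h2
    exact h.1 ⟨j, k, hjk, by omega, h1, h2⟩
  · rintro ⟨i, j, k, hij, hjk, hk, h1, h2⟩
    rw [hlt] at hk
    rw [getD_take l (by omega), getD_take l (by omega)] at h1
    rw [getD_take l (by omega), getD_take l (by omega)] at h2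
    exact h.2.1 ⟨i, j, k, hij, hjk, by omega, h1, h2⟩
  · rintro ⟨i, j, k, m', hij, hjk, hkm, hm', h1, h2, h3⟩
    rw [hlt] at hm'
    rw [getD_take l (by omega), getD_take l (by omega)] at h1
    rw [getD_take l (by omega), getD_take l (by omega)] at h2
    rw [getD_take l (by omega), getD_take l (by omega)] at h3
    exact h.2.2 ⟨i, j, k, m', hij, hjk, hkm, by omega, h1, h2, h3⟩

lemma good_drop_last {n : ℕ} {l : List ℕ} (h : Good (n+1) l) (hl : l.getD n 0 = n + 1) :
    Good n (l.take n) ∧ l = l.take n ++ [n+1] := by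
  have hlen : l.length = n + 1 := h.length
  have hn : n < l.length := by omega
  have heq : l = l.take n ++ [n+1] := by
    have h1 := List.take_concat_get (l := l) (i := n) hn
    rw [List.concat_eq_append] at h1
    rw [List.getD_eq_getElem (hn := hn)] at hl
    rw [hl] at h1
    calc l = l.take (n+1) := by rw [← hlen, List.take_length]
    _ = l.take n ++ [n+1] := h1.symm
  refine ⟨?_, heq⟩
  refine good_of_take ⟨h.2.1, h.2.2.1, h.2.2.2⟩ ?_ (by omega)
  have hp := h.1
  unfold IsPermList at hp ⊢
  rw [List.range'_concat] at hp
  have e : 1 + 1 * n = n + 1 := by omega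
  rw [e] at hp
  rw [heq] at hp
  exact perm_append_cancel hp

lemma good_drop_two {n : ℕ} {l : List ℕ} (h : Good (n+2) l) (h1 : l.getD n 0 = n + 2)
    (h2 : l.getD (n+1) 0 = n + 1) :
    Good n (l.take n) ∧ l = l.take n ++ [n+2, n+1] := by
  have hlen : l.length = n + 2 := h.length
  have hn : n < l.length := by omega
  have hn1 : n + 1 < l.length := by omega
  have heq : l = l.take n ++ [n+2, n+1] := by
    have e1 := List.take_concat_get (l := l) (i := n) hn
    have e2 := List.take_concat_get (l := l) (i := n+1) hn1
    rw [List.concat_eq_append] at e1 e2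
    rw [List.getD_eq_getElem (hn := hn)] at h1
    rw [List.getD_eq_getElem (hn := hn1)] at h2
    rw [h1] at e1
    rw [h2] at e2
    calc l = l.take (n+2) := by rw [← hlen, List.take_length]
    _ = l.take (n+1) ++ [n+1] := e2.symm
    _ = (l.take n ++ [n+2]) ++ [n+1] := by rw [e1]
    _ = l.take n ++ [n+2, n+1] := by rw [List.append_assoc]; rfl
  refine ⟨?_, heq⟩
  refine good_of_take ⟨h.2.1, h.2.2.1, h.2.2.2⟩ ?_ (by omega)
  have hp := h.1
  unfold IsPermList at hp ⊢
  have hr : List.range' 1 (n+2) = List.range' 1 n ++ [n+1, n+2] := by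
    rw [List.range'_concat, List.range'_concat]
    have e1 : 1 + 1 * (n + 1) = n + 2 := by omega
    have e2 : 1 + 1 * n = n + 1 := by omega
    rw [e1, e2, List.append_assoc]
    rfl
  rw [hr, heq] at hp
  have hswap : (l.take n ++ [n+2, n+1]).Perm (l.take n ++ [n+1, n+2]) :=
    List.Perm.append_left _ (List.Perm.swap _ _ _)
  exact perm_append_cancel (hswap.symm.trans hp)

set_option maxHeartbeats 2000000 in
lemma classify {m : ℕ} {l : List ℕ} (h : Good (m+3) l) :
    (∃ l', Good (m+2) l' ∧ l = l' ++ [m+3]) ∨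
    (∃ l', Good (m+1) l' ∧ l = l' ++ [m+3, m+2]) ∨
    (∃ k, 3 ≤ k ∧ k ≤ m+3 ∧ l = sig k (m+3)) := by
  have hlen : l.length = m + 3 := h.length
  have hFB := h.2.1
  have h321 := h.2.2.1
  have h1423 := h.2.2.2
  have inj : ∀ {i j : ℕ}, i < m+3 → j < m+3 → l.getD i 0 = l.getD j 0 → i = j :=
    fun hi hj he => h.getD_inj hi hj he
  obtain ⟨v, hvdef⟩ : ∃ v, v = l.getD (m+2) 0 := ⟨_, rfl⟩
  have hv := h.getD_bound (show m+2 < m+3 by omega)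
  rw [← hvdef] at hv
  by_cases hvn : v = m + 3
  · obtain ⟨hg, he⟩ := good_drop_last (n := m+2) h (by rw [← hvdef, hvn])
    exact Or.inl ⟨_, hg, he⟩
  have hvle : v ≤ m + 2 := by omega
  obtain ⟨q, hq, hqv⟩ := h.exists_index (x := v + 1) (by omega) (by omega)
  have hqne : q ≠ m + 2 := by
    intro he; rw [he, ← hvdef] at hqv; omega
  by_cases hq1 : q = m + 1
  · -- show v = m+2, then reduce to the (n, n-1)-suffix case
    have hvm : v = m + 2 := by
      by_contra hvm
      obtain ⟨p, hp, hpv⟩ := h.exists_index (x := m+3) (by omega) (by omega)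
      have hpq : p ≠ q := by
        intro he; rw [he, hqv] at hpv; omega
      have hpm : p ≠ m + 2 := by
        intro he; rw [he, ← hvdef] at hpv; omega
      have hplt : p < q := by omega
      refine h321 ⟨p, q, m+2, hplt, by omega, by omega, ?_, ?_⟩
      · rw [hqv, ← hvdef]; omega
      · rw [hqv, hpv]; omega
    obtain ⟨hg, he⟩ := good_drop_two (n := m+1) h
      (by rw [← hq1, hqv]; omega) (by rw [← hvdef]; omega)
    exact Or.inr (Or.inl ⟨_, hg, he⟩)
  have hqm : q ≤ m := by omega
  -- b := getD (q+1) satisfies b < v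
  have hbb := h.getD_bound (show q+1 < m+3 by omega)
  have hbne_v : l.getD (q+1) 0 ≠ v := by
    intro he
    rw [hvdef] at he
    have := inj (show q+1 < m+3 by omega) (show m+2 < m+3 by omega) he
    omega
  have hblt : l.getD (q+1) 0 < v + 1 := by
    by_contra hb
    push_neg at hb
    have hne : l.getD (q+1) 0 ≠ v + 1 := by
      intro he
      rw [← hqv] at he
      have := inj (show q+1 < m+3 by omega) (show q < m+3 by omega) he
      omega
    refine hFB ⟨q, m+2, by omega, by omega, ?_, ?_⟩
    · rw [hqv, ← hvdef]
    · rw [hqv]; omega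
  have hbv : l.getD (q+1) 0 < v := by omega
  -- q = 0
  have hq0 : q = 0 := by
    by_contra hq0
    obtain ⟨q', rfl⟩ : ∃ q', q = q' + 1 := ⟨q - 1, by omega⟩
    have haB := h.getD_bound (show q' < m+3 by omega)
    have hane_v1 : l.getD q' 0 ≠ v + 1 := by
      intro he
      rw [← hqv] at he
      have := inj (show q' < m+3 by omega) (show q'+1 < m+3 by omega) he
      omega
    have hane_v : l.getD q' 0 ≠ v := by
      intro he
      rw [hvdef] at he
      have := inj (show q' < m+3 by omega) (show m+2 < m+3 by omega) he
      omega
    have halt : l.getD q' 0 < v + 1 := by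
      by_contra ha
      push_neg at ha
      refine h321 ⟨q', q'+1, m+2, by omega, by omega, by omega, ?_, ?_⟩
      · rw [hqv, ← hvdef]; omega
      · rw [hqv]; omega
    have hav : l.getD q' 0 < v := by omega
    have hab : l.getD (q'+1+1) 0 < l.getD q' 0 := by
      rcases lt_trichotomy (l.getD (q'+1+1) 0) (l.getD q' 0) with hc | hc | hc
      · exact hc
      · exact absurd (inj (by omega) (by omega) hc) (by omega)
      · exfalso
        refine h1423 ⟨q', q'+1, q'+1+1, m+2, by omega, by omega, by omega, by omega,
          hc, ?_, ?_⟩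
        · rw [← hvdef]; exact hbv
        · rw [hqv, ← hvdef]; omega
    obtain ⟨t, htm, htmin⟩ := Finset.exists_min_image (Finset.range (q'+1))
      (fun i => l.getD i 0) ⟨q', by simp⟩
    simp only [Finset.mem_range] at htm
    have hmva : l.getD t 0 ≤ l.getD q' 0 := htmin q' (by simp)
    have hmvb := h.getD_bound (show t < m+3 by omega)
    by_cases hm1 : l.getD t 0 = 1
    · have hbne_mv : l.getD (q'+1+1) 0 ≠ l.getD t 0 := by
        intro he
        have := inj (by omega) (by omega) he
        omega
      refine h1423 ⟨t, q'+1, q'+1+1, m+2, by omega, by omega, by omega, by omega,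
        ?_, ?_, ?_⟩
      · omega
      · rw [← hvdef]; exact hbv
      · rw [hqv, ← hvdef]; omega
    · have hmv2 : 2 ≤ l.getD t 0 := by omega
      obtain ⟨r, hr, hrv⟩ := h.exists_index (x := l.getD t 0 - 1) (by omega) (by omega)
      have hrgt : q' + 1 < r := by
        rcases Nat.lt_or_ge r (q'+1) with hc | hc
        · have := htmin r (by simp [hc])
          omega
        · rcases Nat.eq_or_lt_of_le hc with hc2 | hc2
          · exfalso
            rw [← hc2, hqv] at hrv
            omega
          · omega
      have hasc : l.getD t 0 < l.getD (t+1) 0 := by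
        rcases Nat.eq_or_lt_of_le (show t+1 ≤ q'+1 by omega) with he | hlt
        · rw [he, hqv]; omega
        · have h1 := htmin (t+1) (by simp; omega)
          have h2 : l.getD t 0 ≠ l.getD (t+1) 0 := by
            intro he
            have := inj (by omega) (by omega) he
            omega
          omega
      exact hFB ⟨t, r, by omega, by omega, by rw [hrv]; omega, hasc⟩
  subst hq0
  have hb1 : l.getD 1 0 < v := by simpa using hbv
  have hb1b : 1 ≤ l.getD 1 0 ∧ l.getD 1 0 ≤ m + 3 := h.getD_bound (by omega)
  -- v ≥ 2
  have hv2 : 2 ≤ v := Nat.lt_of_le_of_lt hb1b.1 hb1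
  -- F-facts
  have F2 : ∀ i j, 1 ≤ i → i < j → j ≤ m+1 → l.getD i 0 < v → l.getD j 0 < v →
      l.getD i 0 < l.getD j 0 := by
    intro i j h1i hij hj hiv hjv
    rcases lt_trichotomy (l.getD i 0) (l.getD j 0) with hc | hc | hc
    · exact hc
    · exact absurd (inj (by omega) (by omega) hc) (by omega)
    · exact absurd (⟨0, i, j, by omega, hij, by omega, hc, by rw [hqv]; omega⟩ : Occ321 l) h321
  have F3 : ∀ i j, i < j → j ≤ m+1 → v + 1 < l.getD i 0 → v + 1 < l.getD j 0 →
      l.getD i 0 < l.getD j 0 := by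
    intro i j hij hj hiv hjv
    rcases lt_trichotomy (l.getD i 0) (l.getD j 0) with hc | hc | hc
    · exact hc
    · exact absurd (inj (by omega) (by omega) hc) (by omega)
    · exact absurd (⟨i, j, m+2, hij, by omega, by omega,
        by rw [← hvdef]; omega, hc⟩ : Occ321 l) h321
  have F4 : ∀ i j, 1 ≤ i → i < j → j ≤ m+1 → v + 1 < l.getD i 0 → l.getD j 0 < v →
      False := by
    intro i j h1i hij hj hiv hjv
    rcases Nat.eq_or_lt_of_le h1i with he | hi2
    · rw [← he] at hiv; omega
    · have h1j : l.getD 1 0 < l.getD j 0 := F2 1 j le_rfl (by omega) hj hb1 hjv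
      exact h1423 ⟨1, i, j, m+2, by omega, hij, by omega, by omega,
        h1j, by rw [← hvdef]; exact hjv, by rw [← hvdef]; omega⟩
  -- main assembly
  have key : ∀ i, i < m + 3 → l.getD i 0 = sigf (v+1) (m+3) i := by
    intro i
    induction i using Nat.strong_induction_on with
    | _ i IH =>
      intro hi
      by_cases hi0 : i = 0
      · subst hi0
        rw [hqv]
        simp [sigf]
      by_cases hitop : i = m + 2
      · subst hitop
        rw [← hvdef]
        simp only [sigf]
        split_ifs <;> first | contradiction | omega
      have hx := h.getD_bound hi
      have hxv : l.getD i 0 ≠ v := by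
        intro he
        rw [hvdef] at he
        have := inj (by omega) (show m+2 < m+3 by omega) he
        omega
      have hxv1 : l.getD i 0 ≠ v + 1 := by
        intro he
        rw [← hqv] at he
        have := inj (by omega) (show 0 < m+3 by omega) he
        omega
      rcases Nat.lt_or_ge (l.getD i 0) v with hxs | hxb
      · -- small value
        have hxi : i ≤ l.getD i 0 := by
          by_contra hxi
          push_neg at hxi
          have h1 := IH (l.getD i 0) (by omega) (by omega)
          have h2 : sigf (v+1) (m+3) (l.getD i 0) = l.getD i 0 := by
            simp only [sigf]; split_ifs <;> first | contradiction | omega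
          rw [h2] at h1
          have := inj (show l.getD i 0 < m+3 by omega) hi h1
          omega
        have hiv : i ≤ v - 1 := by omega
        have hs : sigf (v+1) (m+3) i = i := by
          simp only [sigf]; split_ifs <;> first | contradiction | omega
        rw [hs]
        by_contra hne
        have hxgt : i < l.getD i 0 := by omega
        obtain ⟨ji, hji, hjiv⟩ := h.exists_index (x := i) (by omega) (by omega)
        have hji_gt : i < ji := by
          rcases lt_trichotomy ji i with hc | hc | hc
          · have h1 := IH ji hc (by omega)
            rw [hjiv] at h1
            simp only [sigf] at h1
            split_ifs at h1 <;> omega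
          · rw [hc] at hjiv; omega
          · exact hc
        have hji_ne : ji ≠ m + 2 := by
          intro he
          rw [he, ← hvdef] at hjiv
          omega
        have := F2 i ji (by omega) hji_gt (by omega) hxs (by rw [hjiv]; omega)
        rw [hjiv] at this
        omega
      · -- big value
        have hbig : v + 1 < l.getD i 0 := by omega
        have hiv : v ≤ i := by
          by_contra hiv
          push_neg at hiv
          obtain ⟨ji, hji, hjiv⟩ := h.exists_index (x := i) (by omega) (by omega)
          have hji_gt : i < ji := by
            rcases lt_trichotomy ji i with hc | hc | hc
            · have h1 := IH ji hc (by omega)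
              rw [hjiv] at h1
              simp only [sigf] at h1
              split_ifs at h1 <;> omega
            · rw [hc] at hjiv; omega
            · exact hc
          have hji_ne : ji ≠ m + 2 := by
            intro he
            rw [he, ← hvdef] at hjiv
            omega
          exact F4 i ji (by omega) hji_gt (by omega) hbig (by rw [hjiv]; omega)
        have hs : sigf (v+1) (m+3) i = i + 2 := by
          simp only [sigf]; split_ifs <;> first | contradiction | omega
        rw [hs]
        have hxi2 : i + 2 ≤ l.getD i 0 := by
          by_contra hxi2
          push_neg at hxi2
          have h1 := IH (l.getD i 0 - 2) (by omega) (by omega)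
          have h2 : sigf (v+1) (m+3) (l.getD i 0 - 2) = l.getD i 0 := by
            simp only [sigf]; split_ifs <;> first | contradiction | omega
          rw [h2] at h1
          have := inj (show l.getD i 0 - 2 < m+3 by omega) hi h1
          omega
        by_contra hne
        have hxgt : i + 2 < l.getD i 0 := by omega
        obtain ⟨j2, hj2, hj2v⟩ := h.exists_index (x := i+2) (by omega) (by omega)
        have hj2_gt : i < j2 := by
          rcases lt_trichotomy j2 i with hc | hc | hc
          · have h1 := IH j2 hc (by omega)
            rw [hj2v] at h1
            simp only [sigf] at h1
            split_ifs at h1 <;> omega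
          · rw [hc] at hj2v; omega
          · exact hc
        have hj2_ne : j2 ≠ m + 2 := by
          intro he
          rw [he, ← hvdef] at hj2v
          omega
        have := F3 i j2 hj2_gt (by omega) hbig (by rw [hj2v]; omega)
        rw [hj2v] at this
        omega
  right; right
  refine ⟨v+1, by omega, by omega, ?_⟩
  apply List.ext_getElem (by rw [hlen, sig_length])
  intro i h1 h2
  have hi : i < m + 3 := by rw [hlen] at h1; exact h1
  rw [← List.getD_eq_getElem l 0 h1, ← List.getD_eq_getElem (sig (v+1) (m+3)) 0 h2,
    key i hi, sig_getD hi]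

def EL : ℕ → List (List ℕ)
  | 0 => [[]]
  | 1 => [[1]]
  | 2 => [[1,2],[2,1]]
  | (n+3) => ((EL (n+2)).map (· ++ [n+3])) ++
      (((EL (n+1)).map (· ++ [n+3, n+2])) ++
        ((List.range' 3 (n+1)).map (fun k => sig k (n+3))))

lemma good_small {n : ℕ} {l : List ℕ} (hl : l.length ≤ 2) (hp : IsPermList n l) :
    Good n l := by
  refine ⟨hp, ?_, ?_, ?_⟩
  · rintro ⟨j, k, hjk, hk, -, -⟩; omega
  · rintro ⟨i, j, k, hij, hjk, hk, -, -⟩; omega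
  · rintro ⟨i, j, k, m', hij, hjk, hkm, hm, -, -, -⟩; omega

lemma goodE : ∀ n, ∀ l ∈ EL n, Good n l := by
  intro n
  induction n using Nat.strong_induction_on with
  | _ n IH =>
    rcases n with _ | n
    · intro l hl
      simp only [EL, List.mem_singleton] at hl
      subst hl
      exact good_small (by simp) (by simp [IsPermList])
    rcases n with _ | n
    · intro l hl
      simp only [EL, List.mem_singleton] at hl
      subst hl
      exact good_small (by simp) (by unfold IsPermList; decide)
    rcases n with _ | n
    · intro l hl
      simp only [EL, List.mem_cons, List.mem_singleton] at hl
      rcases hl with rfl | rfl | h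
      · exact good_small (by simp) (by unfold IsPermList; decide)
      · exact good_small (by simp) (by unfold IsPermList; decide)
      · simp at h
    · intro l hl
      have hn3 : n + 1 + 1 + 1 = n + 3 := by omega
      rw [hn3] at hl ⊢
      simp only [EL, List.mem_append, List.mem_map] at hl
      rcases hl with ⟨l', hl', rfl⟩ | ⟨l', hl', rfl⟩ | ⟨k, hk, rfl⟩
      · exact good_append_one (IH (n+2) (by omega) l' hl')
      · exact good_append_two (IH (n+1) (by omega) l' hl')
      · rw [List.mem_range'_1] at hk
        exact sig_good hk.1 (by omega)

lemma good_iff : ∀ n l, Good n l ↔ l ∈ EL n := by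
  intro n
  induction n using Nat.strong_induction_on with
  | _ n IH =>
    intro l
    constructor
    · intro h
      have hlen := h.length
      rcases n with _ | n
      · simp only [EL, List.mem_singleton]
        exact List.length_eq_zero_iff.mp hlen
      rcases n with _ | n
      · simp only [EL, List.mem_singleton]
        obtain ⟨a, rfl⟩ := List.length_eq_one_iff.mp hlen
        have := (h.mem_iff a).mp (by simp)
        simp; omega
      rcases n with _ | n
      · simp only [EL, List.mem_cons, List.mem_singleton]
        obtain ⟨a, b, rfl⟩ := List.length_eq_two.mp hlen
        have ha := (h.mem_iff a).mp (by simp)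
        have hb := (h.mem_iff b).mp (by simp)
        have hab : a ≠ b := by
          have := h.nodup; simp at this; exact this
        have : (a = 1 ∧ b = 2) ∨ (a = 2 ∧ b = 1) := by omega
        rcases this with ⟨rfl, rfl⟩ | ⟨rfl, rfl⟩
        · simp
        · simp
      · have hn3 : n + 1 + 1 + 1 = n + 3 := by omega
        rw [hn3] at h ⊢
        simp only [EL, List.mem_append, List.mem_map]
        rcases classify h with ⟨l', hg, rfl⟩ | ⟨l', hg, rfl⟩ | ⟨k, hk3, hkn, rfl⟩
        · exact Or.inl ⟨l', (IH (n+2) (by omega) l').mp hg, rfl⟩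
        · exact Or.inr (Or.inl ⟨l', (IH (n+1) (by omega) l').mp hg, rfl⟩)
        · exact Or.inr (Or.inr ⟨k, by rw [List.mem_range'_1]; omega, rfl⟩)
    · exact goodE n l

lemma sigf_top {k n : ℕ} (hk : 3 ≤ k) (hkn : k ≤ n + 3) :
    sigf k (n+3) (n+2) = k - 1 := by
  simp only [sigf]; split_ifs <;> first | contradiction | omega

lemma sigf_sndtop {n : ℕ} : sigf (n+3) (n+3) (n+1) = n + 1 := by
  simp only [sigf]; split_ifs <;> first | contradiction | omega

lemma EL_nodup : ∀ n, (EL n).Nodup := by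
  intro n
  induction n using Nat.strong_induction_on with
  | _ n IH =>
    rcases n with _ | n
    · simp [EL]
    rcases n with _ | n
    · simp [EL]
    rcases n with _ | n
    · simp [EL]
    have hn3 : n + 1 + 1 + 1 = n + 3 := by omega
    rw [hn3]
    show (((EL (n+2)).map (· ++ [n+3])) ++
      (((EL (n+1)).map (· ++ [n+3, n+2])) ++
        ((List.range' 3 (n+1)).map (fun k => sig k (n+3))))).Nodup
    -- getD facts
    have hget1 : ∀ l' ∈ EL (n+2), (l' ++ [n+3]).getD (n+2) 0 = n+3 := by
      intro l' hl'
      have hlen : l'.length = n + 2 := (goodE _ _ hl').length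
      rw [getD_append_ge l' _ (by omega), hlen]
      simp
    have hget2 : ∀ l' ∈ EL (n+1), (l' ++ [n+3, n+2]).getD (n+2) 0 = n+2 := by
      intro l' hl'
      have hlen : l'.length = n + 1 := (goodE _ _ hl').length
      rw [getD_append_ge l' _ (by omega), hlen]
      simp
    have hget2' : ∀ l' ∈ EL (n+1), (l' ++ [n+3, n+2]).getD (n+1) 0 = n+3 := by
      intro l' hl'
      have hlen : l'.length = n + 1 := (goodE _ _ hl').length
      rw [getD_append_ge l' _ (by omega), hlen]
      simp
    have hget3 : ∀ k, k ∈ List.range' 3 (n+1) → (sig k (n+3)).getD (n+2) 0 = k - 1 := by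
      intro k hk
      rw [List.mem_range'_1] at hk
      rw [sig_getD (by omega)]
      exact sigf_top (by omega) (by omega)
    refine List.Nodup.append ?_ (List.Nodup.append ?_ ?_ ?_) ?_
    · exact (IH (n+2) (by omega)).map (List.append_left_injective _)
    · exact (IH (n+1) (by omega)).map (List.append_left_injective _)
    · refine List.Nodup.map_on ?_ (List.nodup_range' (s := 3) (n := n+1))
      intro k1 hk1 k2 hk2 he
      have h1 : (sig k1 (n+3)).getD 0 0 = k1 := by
        rw [sig_getD (by omega)]; simp [sigf]
      have h2 : (sig k2 (n+3)).getD 0 0 = k2 := by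
        rw [sig_getD (by omega)]; simp [sigf]
      rw [← h1, ← h2, he]
    · -- disjoint c2 c3
      intro a ha hb
      simp only [List.mem_map] at ha hb
      obtain ⟨l', hl', rfl⟩ := ha
      obtain ⟨k, hk, he⟩ := hb
      have e1 := hget2 l' hl'
      have e2 := hget3 k hk
      rw [he] at e2
      rw [List.mem_range'_1] at hk
      rcases Nat.eq_or_lt_of_le (show k ≤ n + 3 by omega) with hke | hke
      · -- k = n+3: compare at index n+1
        have e3 := hget2' l' hl'
        have e4 : (sig k (n+3)).getD (n+1) 0 = n+1 := by
          rw [sig_getD (by omega), hke]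
          exact sigf_sndtop
        rw [he] at e4
        omega
      · omega
    · -- disjoint c1 (c2 ++ c3)
      intro a ha hb
      simp only [List.mem_map, List.mem_append] at ha hb
      obtain ⟨l', hl', rfl⟩ := ha
      have e1 := hget1 l' hl'
      rcases hb with ⟨l'', hl'', he⟩ | ⟨k, hk, he⟩
      · have e2 := hget2 l'' hl''
        rw [he] at e2
        omega
      · have e2 := hget3 k hk
        rw [he] at e2
        rw [List.mem_range'_1] at hk
        omega

lemma EL_length : ∀ n, (EL n).length + (n + 1) = paperFib (n + 2) := by
  intro n
  induction n using Nat.strong_induction_on with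
  | _ n IH =>
    rcases n with _ | n
    · simp [EL, paperFib]
    rcases n with _ | n
    · simp [EL, paperFib]
    rcases n with _ | n
    · simp [EL, paperFib]
    have hn3 : n + 1 + 1 + 1 = n + 3 := by omega
    rw [hn3]
    have h1 := IH (n+2) (by omega)
    have h2 := IH (n+1) (by omega)
    rw [show n+2+2 = n+4 from by omega] at h1
    rw [show n+1+2 = n+3 from by omega] at h2
    have e : (EL (n+3)).length = (EL (n+2)).length + ((EL (n+1)).length + (n+1)) := by
      simp [EL]
    have ef : paperFib (n + 3 + 2) = paperFib (n + 4) + paperFib (n + 3) := rfl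
    omega

/-- For all `n ≥ 0`, `|F_n(321, 1423)| = F_{n+2} - n - 1`, where `F` denotes the
Fibonacci numbers with `F_0 = F_1 = 1`. -/
theorem stmt15 (n : ℕ) :
    (FishburnSet n [[3, 2, 1], [1, 4, 2, 3]]).ncard = paperFib (n + 2) - n - 1 := by
  have hset : FishburnSet n [[3, 2, 1], [1, 4, 2, 3]] = ↑(EL n).toFinset := by
    ext l
    simp only [FishburnSet, Set.mem_setOf_eq, Finset.coe_sort_coe, List.mem_toFinset,
      Finset.mem_coe]
    constructor
    · rintro ⟨hp, hf, hav⟩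
      refine (good_iff n l).mp ⟨hp, hf, ?_, ?_⟩
      · rw [← seqContains_321_iff]
        exact hav _ (by simp)
      · rw [← seqContains_1423_iff]
        exact hav _ (by simp)
    · intro hl
      obtain ⟨hp, hf, h3, h4⟩ := goodE n l hl
      refine ⟨hp, hf, ?_⟩
      intro p hp'
      simp only [List.mem_cons, List.mem_singleton] at hp'
      rcases hp' with rfl | rfl | h
      · rw [seqContains_321_iff]; exact h3
      · rw [seqContains_1423_iff]; exact h4
      · simp at h
  rw [hset, Set.ncard_coe_finset, List.toFinset_card_of_nodup (EL_nodup n)]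
  have := EL_length n
  omega
end

section
/- For all n ≥ 0, the number of Fishburn permutations of length n which avoid both 321 and 3124 is |F_n(321, 3124)| = F_{n+2} − n − 1, where F_m denotes the Fibonacci numbers with F_0 = F_1 = 1 and F_m = F_{m−1} + F_{m−2} for m ≥ 2. -/
/-! ### Auxiliary lemmas -/

section Aux

open List

lemma len3 (γ : List ℕ) (h : γ.length = 3) : ∃ a b c, γ = [a,b,c] := by
  match γ, h with
  | [a,b,c], _ => exact ⟨a,b,c,rfl⟩

lemma len4 (γ : List ℕ) (h : γ.length = 4) : ∃ a b c d, γ = [a,b,c,d] := by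
  match γ, h with
  | [a,b,c,d], _ => exact ⟨a,b,c,d,rfl⟩

lemma contains321 (l : List ℕ) :
    SeqContains l [3,2,1] ↔ ∃ a b c, [a,b,c].Sublist l ∧ c < b ∧ b < a := by
  constructor
  · rintro ⟨γ, hs, hl, h⟩
    obtain ⟨a,b,c,rfl⟩ := len3 γ hl
    refine ⟨a,b,c, hs, ?_, ?_⟩
    · have := h 2 1 (by simp) (by simp); simp [List.getD] at this; omega
    · have := h 1 0 (by simp) (by simp); simp [List.getD] at this; omega
  · rintro ⟨a,b,c,hs,h1,h2⟩
    refine ⟨[a,b,c], hs, rfl, ?_⟩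
    intro i j hi hj
    simp at hi hj
    interval_cases i <;> interval_cases j <;> simp [List.getD] <;> omega

lemma contains3124 (l : List ℕ) :
    SeqContains l [3,1,2,4] ↔ ∃ a b c d, [a,b,c,d].Sublist l ∧ b < c ∧ c < a ∧ a < d := by
  constructor
  · rintro ⟨γ, hs, hl, h⟩
    obtain ⟨a,b,c,d,rfl⟩ := len4 γ hl
    refine ⟨a,b,c,d, hs, ?_, ?_, ?_⟩
    · have := h 1 2 (by simp) (by simp); simp [List.getD] at this; omega
    · have := h 2 0 (by simp) (by simp); simp [List.getD] at this; omega
    · have := h 0 3 (by simp) (by simp); simp [List.getD] at this; omega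
  · rintro ⟨a,b,c,d,hs,h1,h2,h3⟩
    refine ⟨[a,b,c,d], hs, rfl, ?_⟩
    intro i j hi hj
    simp at hi hj
    interval_cases i <;> interval_cases j <;> simp [List.getD] <;> omega

lemma getD_lt {l : List ℕ} {i : ℕ} (h : i < l.length) : l.getD i 0 = l[i] :=
  List.getD_eq_getElem l 0 h

lemma getD_mem {l : List ℕ} {i : ℕ} (h : i < l.length) : l.getD i 0 ∈ l := by
  rw [getD_lt h]; exact List.getElem_mem h

lemma srel_map_add (c : ℕ) (γ p : List ℕ) :
    SameRelOrder (γ.map (· + c)) p ↔ SameRelOrder γ p := by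
  have key : ∀ i j, i < γ.length → j < γ.length →
      ((γ.map (· + c)).getD i 0 < (γ.map (· + c)).getD j 0 ↔ γ.getD i 0 < γ.getD j 0) := by
    intro i j hi hj
    rw [getD_lt (by simpa), getD_lt (by simpa), List.getElem_map, List.getElem_map,
      getD_lt hi, getD_lt hj]
    omega
  unfold SameRelOrder
  simp only [List.length_map]
  constructor
  · rintro ⟨h1, h2⟩
    exact ⟨h1, fun i j hi hj => (key i j hi hj).symm.trans (h2 i j hi hj)⟩
  · rintro ⟨h1, h2⟩
    exact ⟨h1, fun i j hi hj => (key i j hi hj).trans (h2 i j hi hj)⟩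

lemma contains_map_add (c : ℕ) (l p : List ℕ) :
    SeqContains (l.map (· + c)) p ↔ SeqContains l p := by
  constructor
  · rintro ⟨γ, hs, hr⟩
    obtain ⟨δ, hδ, rfl⟩ := List.sublist_map_iff.mp hs
    exact ⟨δ, hδ, (srel_map_add c δ p).mp hr⟩
  · rintro ⟨γ, hs, hr⟩
    exact ⟨γ.map (· + c), hs.map _, (srel_map_add c γ p).mpr hr⟩

lemma getD_map_add {c : ℕ} {l : List ℕ} {i : ℕ} (h : i < l.length) :
    (l.map (· + c)).getD i 0 = l.getD i 0 + c := by
  rw [getD_lt (by simpa), List.getElem_map, getD_lt h]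

lemma fish_map_add (c : ℕ) (l : List ℕ) :
    HasFishburnCopy (l.map (· + c)) ↔ HasFishburnCopy l := by
  unfold HasFishburnCopy
  simp only [List.length_map]
  constructor
  · rintro ⟨j, k, h1, h2, h3, h4⟩
    rw [getD_map_add (show j < l.length by omega), getD_map_add h2] at h3
    rw [getD_map_add (show j < l.length by omega),
      getD_map_add (show j + 1 < l.length by omega)] at h4
    exact ⟨j, k, h1, h2, by omega, by omega⟩
  · rintro ⟨j, k, h1, h2, h3, h4⟩
    refine ⟨j, k, h1, h2, ?_, ?_⟩
    · rw [getD_map_add (show j < l.length by omega), getD_map_add h2]; omega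
    · rw [getD_map_add (show j < l.length by omega),
        getD_map_add (show j + 1 < l.length by omega)]; omega

end Aux


section Aux2
open List

lemma sub_trans_one {u : List ℕ} {g : List ℕ} (hs : g.Sublist u) : g.Sublist (1 :: u) :=
  hs.trans (List.sublist_cons_self _ _)

lemma sub_trans_two {u : List ℕ} {g : List ℕ} (hs : g.Sublist u) : g.Sublist (2 :: 1 :: u) :=
  (hs.trans (List.sublist_cons_self _ _)).trans (List.sublist_cons_self _ _)

lemma c321_one (u : List ℕ) (h : ∀ y ∈ u, 1 ≤ y) :
    SeqContains (1 :: u) [3,2,1] ↔ SeqContains u [3,2,1] := by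
  rw [contains321, contains321]
  constructor
  · rintro ⟨a,b,c,hs,h1,h2⟩
    rcases List.sublist_cons_iff.mp hs with hs' | ⟨r, hr, hr'⟩
    · exact ⟨a,b,c,hs',h1,h2⟩
    · injection hr with ha hbc
      subst ha; subst hbc
      have hb : b ∈ u := hr'.subset (by simp)
      have := h b hb; omega
  · rintro ⟨a,b,c,hs,h1,h2⟩
    exact ⟨a,b,c, sub_trans_one hs, h1, h2⟩

lemma c3124_one (u : List ℕ) (h : ∀ y ∈ u, 1 ≤ y) :
    SeqContains (1 :: u) [3,1,2,4] ↔ SeqContains u [3,1,2,4] := by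
  rw [contains3124, contains3124]
  constructor
  · rintro ⟨a,b,c,d,hs,h1,h2,h3⟩
    rcases List.sublist_cons_iff.mp hs with hs' | ⟨r, hr, hr'⟩
    · exact ⟨a,b,c,d,hs',h1,h2,h3⟩
    · injection hr with ha hbc
      subst ha; subst hbc
      have hb : b ∈ u := hr'.subset (by simp)
      have := h b hb; omega
  · rintro ⟨a,b,c,d,hs,h1,h2,h3⟩
    exact ⟨a,b,c,d, sub_trans_one hs, h1, h2, h3⟩

lemma c321_two (u : List ℕ) (h : ∀ y ∈ u, 2 ≤ y) :
    SeqContains (2 :: 1 :: u) [3,2,1] ↔ SeqContains u [3,2,1] := by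
  rw [contains321, contains321]
  constructor
  · rintro ⟨a,b,c,hs,h1,h2⟩
    rcases List.sublist_cons_iff.mp hs with hs' | ⟨r, hr, hr'⟩
    · -- [a,b,c] <+ 1 :: u
      rcases List.sublist_cons_iff.mp hs' with hs'' | ⟨r, hr, hr'⟩
      · exact ⟨a,b,c,hs'',h1,h2⟩
      · injection hr with ha hbc
        subst ha; subst hbc
        have hb : b ∈ u := hr'.subset (by simp)
        have := h b hb; omega
    · -- a = 2
      injection hr with ha hbc
      subst ha; subst hbc
      rcases List.sublist_cons_iff.mp hr' with hs'' | ⟨r, hr2, hr2'⟩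
      · have hb : b ∈ u := hs''.subset (by simp)
        have := h b hb; omega
      · injection hr2 with hb hc
        subst hb; subst hc
        have hc : c ∈ u := hr2'.subset (by simp)
        have := h c hc; omega
  · rintro ⟨a,b,c,hs,h1,h2⟩
    exact ⟨a,b,c, sub_trans_two hs, h1, h2⟩

lemma c3124_two (u : List ℕ) (h : ∀ y ∈ u, 2 ≤ y) :
    SeqContains (2 :: 1 :: u) [3,1,2,4] ↔ SeqContains u [3,1,2,4] := by
  rw [contains3124, contains3124]
  constructor
  · rintro ⟨a,b,c,d,hs,h1,h2,h3⟩
    rcases List.sublist_cons_iff.mp hs with hs' | ⟨r, hr, hr'⟩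
    · rcases List.sublist_cons_iff.mp hs' with hs'' | ⟨r, hr, hr'⟩
      · exact ⟨a,b,c,d,hs'',h1,h2,h3⟩
      · injection hr with ha hbc
        subst ha; subst hbc
        omega
    · injection hr with ha hbc
      subst ha; subst hbc
      -- [b,c,d] <+ 1 :: u, with b < c < 2
      have hb : b ∈ (1 :: u) := hr'.subset (by simp)
      rcases List.mem_cons.mp hb with hb1 | hbu
      · omega
      · have := h b hbu; omega
  · rintro ⟨a,b,c,d,hs,h1,h2,h3⟩
    exact ⟨a,b,c,d, sub_trans_two hs, h1, h2, h3⟩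

lemma fish_one (u : List ℕ) (h : ∀ y ∈ u, 1 ≤ y) :
    HasFishburnCopy (1 :: u) ↔ HasFishburnCopy u := by
  unfold HasFishburnCopy
  simp only [List.length_cons]
  constructor
  · rintro ⟨j,k,h1,h2,h3,h4⟩
    obtain ⟨k', rfl⟩ : ∃ k', k = k' + 1 := ⟨k-1, by omega⟩
    rw [List.getD_cons_succ] at h3
    cases j with
    | zero =>
      rw [List.getD_cons_zero] at h3
      have : u.getD k' 0 ∈ u := getD_mem (by omega)
      have := h _ this; omega
    | succ j' =>
      rw [List.getD_cons_succ] at h3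
      rw [show j' + 1 + 1 = (j' + 1) + 1 from rfl, List.getD_cons_succ,
        List.getD_cons_succ] at h4
      exact ⟨j', k', by omega, by omega, h3, h4⟩
  · rintro ⟨j,k,h1,h2,h3,h4⟩
    refine ⟨j+1, k+1, by omega, by omega, ?_, ?_⟩
    · rw [List.getD_cons_succ, List.getD_cons_succ]; exact h3
    · rw [List.getD_cons_succ, show j + 1 + 1 = (j + 1) + 1 from rfl,
        List.getD_cons_succ]; exact h4

lemma fish_two (u : List ℕ) (h : ∀ y ∈ u, 2 ≤ y) :
    HasFishburnCopy (2 :: 1 :: u) ↔ HasFishburnCopy u := by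
  unfold HasFishburnCopy
  simp only [List.length_cons]
  constructor
  · rintro ⟨j,k,h1,h2,h3,h4⟩
    obtain ⟨k', rfl⟩ : ∃ k', k = k' + 2 := ⟨k-2, by omega⟩
    rw [show k' + 2 = (k' + 1) + 1 from rfl, List.getD_cons_succ, List.getD_cons_succ] at h3
    match j with
    | 0 =>
      rw [List.getD_cons_zero, show (0:ℕ) + 1 = 0 + 1 from rfl, List.getD_cons_succ,
        List.getD_cons_zero] at h4
      omega
    | 1 =>
      rw [List.getD_cons_succ, List.getD_cons_zero] at h3
      have : u.getD k' 0 ∈ u := getD_mem (by omega)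
      have := h _ this; omega
    | (j' + 2) =>
      rw [show j' + 2 = (j' + 1) + 1 from rfl, List.getD_cons_succ, List.getD_cons_succ] at h3
      rw [show j' + 2 = (j' + 1) + 1 from rfl, show j' + 1 + 1 + 1 = (j' + 2) + 1 from rfl,
        List.getD_cons_succ, List.getD_cons_succ,
        show j' + 2 = (j' + 1) + 1 from rfl, List.getD_cons_succ, List.getD_cons_succ] at h4
      exact ⟨j', k', by omega, by omega, h3, h4⟩
  · rintro ⟨j,k,h1,h2,h3,h4⟩
    refine ⟨j+2, k+2, by omega, by omega, ?_, ?_⟩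
    · rw [show j + 2 = (j + 1) + 1 from rfl, show k + 2 = (k + 1) + 1 from rfl,
        List.getD_cons_succ, List.getD_cons_succ, List.getD_cons_succ, List.getD_cons_succ]
      exact h3
    · rw [show j + 2 = (j + 1) + 1 from rfl, show j + 1 + 1 + 1 = (j + 2) + 1 from rfl,
        show j + 2 = (j+1) + 1 from rfl,
        List.getD_cons_succ, List.getD_cons_succ, List.getD_cons_succ, List.getD_cons_succ]
      exact h4

lemma map_sub_add (c : ℕ) (l : List ℕ) : (l.map (· + c)).map (· - c) = l := by
  rw [List.map_map]
  have : ∀ a ∈ l, ((· - c) ∘ (· + c)) a = id a := by intro a _; simp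
  rw [List.map_congr_left this, List.map_id]

lemma range'_shift (c m : ℕ) : List.range' (1+c) m = (List.range' 1 m).map (· + c) := by
  have : (List.range' 1 m).map (· + c) = (List.range' 1 m).map (c + ·) := by
    apply List.map_congr_left; intro a _; omega
  rw [this, List.map_add_range']
  ring_nf

lemma perm_shift {c m : ℕ} {l : List ℕ} :
    l.map (· + c) ~ List.range' (1+c) m ↔ l ~ List.range' 1 m := by
  rw [range'_shift]
  constructor
  · intro hp
    have := hp.map (· - c)
    rwa [map_sub_add, map_sub_add] at this
  · exact fun hp => hp.map _

end Aux2

section Memb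
open List

def Aset (n : ℕ) : Set (List ℕ) := FishburnSet n [[3,2,1],[3,1,2,4]]

lemma memA {n : ℕ} {l : List ℕ} : l ∈ Aset n ↔
    l ~ List.range' 1 n ∧ ¬ HasFishburnCopy l ∧
      ¬ SeqContains l [3,2,1] ∧ ¬ SeqContains l [3,1,2,4] := by
  simp only [Aset, FishburnSet, IsPermList, FishburnFree, Set.mem_setOf_eq,
    List.mem_cons, List.mem_singleton, forall_eq_or_imp, forall_eq]
  tauto

lemma mem_ins1 (m : ℕ) (l : List ℕ) :
    (1 :: l.map (· + 1)) ∈ Aset (m+1) ↔ l ∈ Aset m := by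
  rw [memA, memA]
  have hentry : ∀ y ∈ l.map (· + 1), 1 ≤ y := by simp
  have hperm : ((1 :: l.map (· + 1)) ~ List.range' 1 (m+1)) ↔ (l ~ List.range' 1 m) := by
    rw [show List.range' 1 (m+1) = 1 :: List.range' 2 m from rfl, List.perm_cons]
    exact perm_shift (c := 1)
  rw [hperm, fish_one _ hentry, fish_map_add, c321_one _ hentry, contains_map_add,
    c3124_one _ hentry, contains_map_add]

lemma mem_ins2 (m : ℕ) (l : List ℕ) :
    (2 :: 1 :: l.map (· + 2)) ∈ Aset (m+2) ↔ l ∈ Aset m := by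
  rw [memA, memA]
  have hentry : ∀ y ∈ l.map (· + 2), 2 ≤ y := by simp
  have hperm : ((2 :: 1 :: l.map (· + 2)) ~ List.range' 1 (m+2)) ↔ (l ~ List.range' 1 m) := by
    rw [show List.range' 1 (m+2) = 1 :: 2 :: List.range' 3 m from rfl]
    constructor
    · intro hp
      have := (List.Perm.swap 1 2 (l.map (· + 2))).symm.trans hp
      rw [List.perm_cons, List.perm_cons] at this
      exact (perm_shift (c := 2)).mp this
    · intro hp
      refine (List.Perm.swap 1 2 (l.map (· + 2))).trans ?_
      rw [List.perm_cons, List.perm_cons]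
      exact (perm_shift (c := 2)).mpr hp
  rw [hperm, fish_two _ hentry, fish_map_add, c321_two _ hentry, contains_map_add,
    c3124_two _ hentry, contains_map_add]

end Memb

section Tail
open List

/-- The rigid permutation `x 1 (x+1) … n 2 … (x-1)`. -/
def tailP (x n : ℕ) : List ℕ :=
  x :: 1 :: (List.range' (x+1) (n-x) ++ List.range' 2 (x-2))

lemma sub2of3a {a b c : ℕ} : [a,b].Sublist [a,b,c] :=
  (List.nil_sublist _).cons _ |>.cons₂ _ |>.cons₂ _

lemma sub2of3b {a b c : ℕ} : [b,c].Sublist [a,b,c] :=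
  (List.Sublist.refl [b,c]).cons _

lemma sub2of4ab {a b c d : ℕ} : [a,b].Sublist [a,b,c,d] :=
  ((List.nil_sublist _).cons _ |>.cons _ |>.cons₂ _ |>.cons₂ _)

lemma sub2of4ac {a b c d : ℕ} : [a,c].Sublist [a,b,c,d] :=
  ((List.nil_sublist _).cons _ |>.cons₂ _ |>.cons _ |>.cons₂ _)

lemma sub2of4cd {a b c d : ℕ} : [c,d].Sublist [a,b,c,d] :=
  ((List.Sublist.refl [c,d]).cons _).cons _

lemma sub2of3cd {b c d : ℕ} : [c,d].Sublist [b,c,d] :=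
  (List.Sublist.refl [c,d]).cons _

/-- The key order structure of `B ++ S`. -/
lemma pairwiseBS (x n : ℕ) :
    List.Pairwise (fun p q => (p < q ∨ (x < p ∧ q < x)) ∧ ¬ (p < x ∧ x < q))
      (List.range' (x+1) (n-x) ++ List.range' 2 (x-2)) := by
  rw [List.pairwise_append]
  refine ⟨(List.pairwise_lt_range').imp_of_mem ?_, (List.pairwise_lt_range').imp_of_mem ?_, ?_⟩
  · intro a b ha hb hab
    have ha' := List.mem_range'_1.mp ha
    exact ⟨Or.inl hab, by omega⟩
  · intro a b ha hb hab
    have hb' := List.mem_range'_1.mp hb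
    exact ⟨Or.inl hab, by omega⟩
  · intro a ha b hb
    have ha' := List.mem_range'_1.mp ha
    have hb' := List.mem_range'_1.mp hb
    exact ⟨Or.inr ⟨by omega, by omega⟩, by omega⟩

lemma ordBS {x n p q : ℕ}
    (h : [p,q].Sublist (List.range' (x+1) (n-x) ++ List.range' 2 (x-2))) :
    (p < q ∨ (x < p ∧ q < x)) ∧ ¬ (p < x ∧ x < q) :=
  List.pairwise_iff_forall_sublist.mp (pairwiseBS x n) h

lemma memBS {x n y : ℕ} (h3 : 3 ≤ x) (h : y ∈ List.range' (x+1) (n-x) ++ List.range' 2 (x-2)) :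
    2 ≤ y ∧ y ≠ x := by
  rcases List.mem_append.mp h with h' | h' <;> have := List.mem_range'_1.mp h' <;> omega

end Tail

section TailMem
open List

lemma tail_getD (x n : ℕ) (h3 : 3 ≤ x) (hxn : x ≤ n) (i : ℕ) (hi : i < n - 2) :
    (tailP x n).getD (i+2) 0 = if i < n - x then x + 1 + i else 2 + (i - (n - x)) := by
  have hlen : (List.range' (x+1) (n-x) ++ List.range' 2 (x-2)).length = n - 2 := by
    simp [List.length_append, List.length_range']; omega
  show (x :: 1 :: (List.range' (x+1) (n-x) ++ List.range' 2 (x-2))).getD (i+2) 0 = _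
  rw [show i + 2 = (i+1)+1 from rfl, List.getD_cons_succ, List.getD_cons_succ,
    getD_lt (show i < _ by rw [hlen]; omega), List.getElem_append]
  simp only [List.length_range']
  split_ifs with hc
  · rw [List.getElem_range'_1]
  · rw [List.getElem_range'_1]

lemma tail_len (x n : ℕ) (h3 : 3 ≤ x) (hxn : x ≤ n) : (tailP x n).length = n := by
  simp [tailP, List.length_append, List.length_range']; omega

lemma tail_perm (x n : ℕ) (h3 : 3 ≤ x) (hxn : x ≤ n) :
    tailP x n ~ List.range' 1 n := by
  set B := List.range' (x+1) (n-x) with hB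
  set S := List.range' 2 (x-2) with hS
  have e1 : List.range' 1 n = 1 :: List.range' 2 (n-1) := by
    obtain ⟨m, rfl⟩ : ∃ m, n = m + 1 := ⟨n - 1, by omega⟩
    simp only [Nat.add_sub_cancel]
    rfl
  have e2 : List.range' 2 (n-1) = S ++ List.range' x ((n-x)+1) := by
    have := List.range'_append (s := 2) (m := x-2) (n := (n-x)+1) (step := 1)
    rw [show 2 + 1 * (x-2) = x by omega, show (x-2) + (n-x+1) = n - 1 by omega] at this
    rw [← this, hS]
  have e3 : List.range' x ((n-x)+1) = x :: B := rfl
  have p1 : tailP x n ~ x :: 1 :: (S ++ B) := by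
    exact ((List.perm_append_comm).cons 1).cons x
  have p2 : (1 : ℕ) :: (S ++ x :: B) ~ 1 :: (x :: (S ++ B)) := List.perm_middle.cons 1
  have p4 : (1 : ℕ) :: x :: (S ++ B) ~ x :: 1 :: (S ++ B) := List.Perm.swap x 1 _
  rw [e1, e2, e3]
  exact p1.trans (p4.symm.trans p2.symm)

lemma tail_fish (x n : ℕ) (h3 : 3 ≤ x) (hxn : x ≤ n) : ¬ HasFishburnCopy (tailP x n) := by
  rintro ⟨j, k, h1, h2, hval, hasc⟩
  rw [tail_len x n h3 hxn] at h2
  have hg0 : (tailP x n).getD 0 0 = x := rfl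
  have hg1 : (tailP x n).getD 1 0 = 1 := rfl
  obtain ⟨k', rfl⟩ : ∃ k', k = k' + 2 := ⟨k - 2, by omega⟩
  have ek := tail_getD x n h3 hxn k' (by omega)
  match j with
  | 0 =>
    rw [hg0, hg1] at hasc
    omega
  | 1 =>
    rw [hg1, ek] at hval
    split_ifs at hval <;> omega
  | (j' + 2) =>
    have ej := tail_getD x n h3 hxn j' (by omega)
    have ej1 := tail_getD x n h3 hxn (j'+1) (by omega)
    rw [ej, ek] at hval
    rw [ej, show j' + 2 + 1 = (j'+1) + 2 from rfl, ej1] at hasc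
    split_ifs at hval hasc <;> omega

lemma tail_321 (x n : ℕ) (h3 : 3 ≤ x) (hxn : x ≤ n) :
    ¬ SeqContains (tailP x n) [3,2,1] := by
  rw [contains321]
  rintro ⟨a,b,c,hs,h1,h2⟩
  rcases List.sublist_cons_iff.mp hs with hs' | ⟨r, hr, hr'⟩
  · rcases List.sublist_cons_iff.mp hs' with hs'' | ⟨r, hr, hr'⟩
    · have hab := ordBS (sub2of3a.trans hs'')
      have hbc := ordBS (sub2of3b.trans hs'')
      omega
    · injection hr with ha hbc; subst ha; subst hbc
      omega
  · injection hr with ha hbc; subst ha; subst hbc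
    rcases List.sublist_cons_iff.mp hr' with hs'' | ⟨r, hr2, hr2'⟩
    · have hbc := ordBS hs''
      omega
    · injection hr2 with hb hc; subst hb; subst hc
      have hc2 := memBS h3 (hr2'.subset (List.mem_singleton_self c))
      omega

lemma tail_3124 (x n : ℕ) (h3 : 3 ≤ x) (hxn : x ≤ n) :
    ¬ SeqContains (tailP x n) [3,1,2,4] := by
  rw [contains3124]
  rintro ⟨a,b,c,d,hs,h1,h2,h4⟩
  rcases List.sublist_cons_iff.mp hs with hs' | ⟨r, hr, hr'⟩
  · rcases List.sublist_cons_iff.mp hs' with hs'' | ⟨r, hr, hr'⟩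
    · have hab := ordBS (sub2of4ab.trans hs'')
      have hac := ordBS (sub2of4ac.trans hs'')
      have hcd := ordBS (sub2of4cd.trans hs'')
      omega
    · injection hr with ha hbc; subst ha; subst hbc
      omega
  · injection hr with ha hbc; subst ha; subst hbc
    rcases List.sublist_cons_iff.mp hr' with hs'' | ⟨r, hr2, hr2'⟩
    · have hcd := ordBS (sub2of3cd.trans hs'')
      omega
    · injection hr2 with hb hc; subst hb; subst hc
      have hcd := ordBS hr2'
      omega

lemma tail_mem (x n : ℕ) (h3 : 3 ≤ x) (hxn : x ≤ n) : tailP x n ∈ Aset n :=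
  memA.mpr ⟨tail_perm x n h3 hxn, tail_fish x n h3 hxn, tail_321 x n h3 hxn,
    tail_3124 x n h3 hxn⟩

end TailMem

section Struct
open List

lemma pair_sub {t : List ℕ} (hn : t.Nodup) {u v : ℕ} (hu : u ∈ t) (hv : v ∈ t)
    (huv : u ≠ v) : [u,v].Sublist t ∨ [v,u].Sublist t := by
  induction t with
  | nil => cases hu
  | cons w t' ih =>
    obtain ⟨hw, hn'⟩ := List.nodup_cons.mp hn
    rcases List.mem_cons.mp hu with rfl | hu'
    · have hv' : v ∈ t' := by
        rcases List.mem_cons.mp hv with h | h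
        · exact absurd h.symm huv
        · exact h
      exact Or.inl ((List.singleton_sublist.mpr hv').cons₂ u)
    · rcases List.mem_cons.mp hv with rfl | hv'
      · exact Or.inr ((List.singleton_sublist.mpr hu').cons₂ v)
      · rcases ih hn' hu' hv' with h | h
        · exact Or.inl (h.cons w)
        · exact Or.inr (h.cons w)

lemma triple_sub {t : List ℕ} (hn : t.Nodup) {a b c : ℕ} (hab : [a,b].Sublist t)
    (hc : c ∈ t) (hca : c ≠ a) (hcb : c ≠ b) :
    [c,a,b].Sublist t ∨ [a,c,b].Sublist t ∨ [a,b,c].Sublist t := by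
  induction t with
  | nil => cases hc
  | cons w t' ih =>
    obtain ⟨hw, hn'⟩ := List.nodup_cons.mp hn
    by_cases hwc : w = c
    · subst hwc
      rcases List.sublist_cons_iff.mp hab with h | ⟨r, hr, hr'⟩
      · exact Or.inl (h.cons₂ w)
      · injection hr with h1 h2
        exact absurd h1.symm hca
    · have hc' : c ∈ t' := by
        rcases List.mem_cons.mp hc with h | h
        · exact absurd h.symm hwc
        · exact h
      by_cases hwa : w = a
      · subst hwa
        have hb' : b ∈ t' := by
          rcases List.sublist_cons_iff.mp hab with h | ⟨r, hr, hr'⟩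
          · exact absurd (h.subset (by simp)) hw
          · injection hr with h1 h2
            subst h2
            exact hr'.subset (by simp)
        rcases pair_sub hn' hc' hb' hcb with h | h
        · exact Or.inr (Or.inl (h.cons₂ w))
        · exact Or.inr (Or.inr (h.cons₂ w))
      · have hab' : [a,b].Sublist t' := by
          rcases List.sublist_cons_iff.mp hab with h | ⟨r, hr, hr'⟩
          · exact h
          · injection hr with h1 h2
            exact absurd h1.symm hwa
        rcases ih hn' hab' hc' with h | h | h
        · exact Or.inl (h.cons w)
        · exact Or.inr (Or.inl (h.cons w))
        · exact Or.inr (Or.inr (h.cons w))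

lemma fish_of_mem {p0 p1 : ℕ} {t : List ℕ} {b : ℕ} (hb : b ∈ t) (he : p0 = b + 1)
    (hl : p0 < p1) : HasFishburnCopy (p0 :: p1 :: t) := by
  obtain ⟨i, hi, rfl⟩ := List.mem_iff_getElem.mp hb
  refine ⟨0, i+2, by omega, ?_, ?_, ?_⟩
  · simp only [List.length_cons]; omega
  · rw [List.getD_cons_zero, show i+2 = (i+1)+1 from rfl, List.getD_cons_succ,
      List.getD_cons_succ, getD_lt hi]
    exact he
  · rw [List.getD_cons_zero, show (0:ℕ)+1 = 0+1 from rfl, List.getD_cons_succ,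
      List.getD_cons_zero]
    exact hl

end Struct

section StepLemma
open List

lemma step (m : ℕ) : Aset (m+2) =
    (fun l => 1 :: l.map (· + 1)) '' Aset (m+1) ∪
    (fun l => 2 :: 1 :: l.map (· + 2)) '' Aset m ∪
    {l | ∃ x, 3 ≤ x ∧ x ≤ m+2 ∧ l = tailP x (m+2)} := by
  ext π
  constructor
  · intro hπ
    obtain ⟨hp, hf, h321, h3124⟩ := memA.mp hπ
    have hlen : π.length = m + 2 := by rw [hp.length_eq, List.length_range']
    have hnd : π.Nodup := hp.nodup_iff.mpr (List.nodup_range' (s := 1) (n := m+2))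
    have hmemiff : ∀ y, y ∈ π ↔ 1 ≤ y ∧ y < 1 + (m + 2) := fun y => by
      rw [hp.mem_iff, List.mem_range'_1]
    obtain ⟨p0, p1, t, rfl⟩ : ∃ p0 p1 t, π = p0 :: p1 :: t := by
      rcases π with _ | ⟨p0, _ | ⟨p1, t⟩⟩
      · exfalso; rw [List.length_nil] at hlen; omega
      · exfalso; rw [List.length_singleton] at hlen; omega
      · exact ⟨p0, p1, t, rfl⟩
    obtain ⟨h1nd, hnd'⟩ := List.nodup_cons.mp hnd
    obtain ⟨h2nd, hndt⟩ := List.nodup_cons.mp hnd'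
    by_cases hp0 : p0 = 1
    · subst hp0
      left; left
      have hent : ∀ y ∈ p1 :: t, 2 ≤ y := by
        intro y hy
        have h1 := (hmemiff y).mp (List.mem_cons_of_mem _ hy)
        have : y ≠ 1 := fun h => h1nd (h ▸ hy)
        omega
      have hrec : ((p1 :: t).map (· - 1)).map (· + 1) = p1 :: t := by
        rw [List.map_map]
        conv_rhs => rw [← List.map_id (p1 :: t)]
        apply List.map_congr_left
        intro y hy; have := hent y hy; simp; omega
      refine ⟨(p1 :: t).map (· - 1), ?_,
        by show 1 :: ((p1 :: t).map (· - 1)).map (· + 1) = 1 :: p1 :: t; rw [hrec]⟩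
      apply (mem_ins1 (m+1) _).mp
      rw [hrec]
      exact hπ
    · have hb0 := (hmemiff p0).mp (List.mem_cons_self)
      have hp1 : p1 = 1 := by
        by_contra hne
        have h1mem : (1:ℕ) ∈ p0 :: p1 :: t := (hmemiff 1).mpr ⟨le_refl _, by omega⟩
        have h1t : (1:ℕ) ∈ t := by
          rcases List.mem_cons.mp h1mem with h | h
          · exact absurd h.symm hp0
          · rcases List.mem_cons.mp h with h' | h'
            · exact absurd h'.symm hne
            · exact h'
        have hb1 := (hmemiff p1).mp (List.mem_cons_of_mem _ (List.mem_cons_self))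
        rcases lt_trichotomy p0 p1 with hlt | heq | hgt
        · have hbm : p0 - 1 ∈ p0 :: p1 :: t := (hmemiff _).mpr ⟨by omega, by omega⟩
          have hbt : p0 - 1 ∈ t := by
            rcases List.mem_cons.mp hbm with h | h
            · omega
            · rcases List.mem_cons.mp h with h' | h'
              · omega
              · exact h'
          exact hf (fish_of_mem hbt (by omega) hlt)
        · exact h1nd (heq ▸ List.mem_cons_self)
        · apply h321
          rw [contains321]
          exact ⟨p0, p1, 1,
            ((List.singleton_sublist.mpr h1t).cons₂ p1).cons₂ p0, by omega, hgt⟩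
      subst hp1
      have hmt : ∀ y ∈ t, 2 ≤ y ∧ y ≤ m + 2 ∧ y ≠ p0 := by
        intro y hy
        have h1 := (hmemiff y).mp (List.mem_cons_of_mem _ (List.mem_cons_of_mem _ hy))
        have hy1 : y ≠ 1 := fun h => h2nd (h ▸ hy)
        have hyp0 : y ≠ p0 := fun h => h1nd (h ▸ List.mem_cons_of_mem _ hy)
        omega
      by_cases hp02 : p0 = 2
      · subst hp02
        left; right
        have hent : ∀ y ∈ t, 3 ≤ y := by
          intro y hy
          have := hmt y hy
          omega
        have hrec : (t.map (· - 2)).map (· + 2) = t := by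
          rw [List.map_map]
          conv_rhs => rw [← List.map_id t]
          apply List.map_congr_left
          intro y hy; have := hent y hy; simp; omega
        refine ⟨t.map (· - 2), ?_,
          by show 2 :: 1 :: (t.map (· - 2)).map (· + 2) = 2 :: 1 :: t; rw [hrec]⟩
        apply (mem_ins2 m _).mp
        rw [hrec]
        exact hπ
      · right
        have hp03 : 3 ≤ p0 := by omega
        refine ⟨p0, hp03, by omega, ?_⟩
        have hperm_t : t ~ List.range' (p0+1) (m+2-p0) ++ List.range' 2 (p0-2) := by
          have h0 := hp.trans (tail_perm p0 (m+2) hp03 (by omega)).symm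
          rw [show tailP p0 (m+2) =
            p0 :: 1 :: (List.range' (p0+1) (m+2-p0) ++ List.range' 2 (p0-2)) from rfl] at h0
          exact (List.perm_cons _).mp ((List.perm_cons _).mp h0)
        have hpw : t.Pairwise
            (fun a b => (a < b ∨ (p0 < a ∧ b < p0)) ∧ ¬(a < p0 ∧ p0 < b)) := by
          rw [List.pairwise_iff_forall_sublist]
          intro a b hab
          have hat : a ∈ t := hab.subset (by simp)
          have hbt : b ∈ t := hab.subset (by simp)
          have ha' := hmt a hat
          have hb' := hmt b hbt
          have hii : ¬(a < p0 ∧ p0 < b) := by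
            rintro ⟨hxa, hxb⟩
            apply h3124
            rw [contains3124]
            exact ⟨p0, 1, a, b, (hab.cons₂ 1).cons₂ p0, by omega, hxa, by omega⟩
          refine ⟨?_, hii⟩
          rcases lt_trichotomy a b with h | h | h
          · exact Or.inl h
          · exact absurd h (List.pairwise_iff_forall_sublist.mp hndt hab)
          · have hia : p0 < a := by
              by_contra hle
              apply h321
              rw [contains321]
              exact ⟨p0, a, b, (hab.cons 1).cons₂ p0, h, by omega⟩
            by_cases hb2 : b < p0
            · exact Or.inr ⟨hia, hb2⟩
            · exfalso
              have hbp : p0 < b := by omega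
              have h2t : (2:ℕ) ∈ t := by
                have h2m : (2:ℕ) ∈ p0 :: 1 :: t := (hmemiff 2).mpr ⟨by omega, by omega⟩
                rcases List.mem_cons.mp h2m with h' | h'
                · omega
                · rcases List.mem_cons.mp h' with h'' | h''
                  · omega
                  · exact h''
              rcases triple_sub hndt hab h2t (by omega) (by omega) with h' | h' | h'
              · apply h3124
                rw [contains3124]
                exact ⟨p0, 1, 2, a, ((sub2of3a.trans h').cons₂ 1).cons₂ p0,
                  by omega, by omega, by omega⟩
              · apply h3124
                rw [contains3124]
                exact ⟨p0, 1, 2, b, ((sub2of3b.trans h').cons₂ 1).cons₂ p0,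
                  by omega, by omega, by omega⟩
              · apply h321
                rw [contains321]
                exact ⟨a, b, 2, (h'.cons 1).cons p0, by omega, h⟩
        have hEq : t = List.range' (p0+1) (m+2-p0) ++ List.range' 2 (p0-2) := by
          have hanti : IsAntisymm ℕ
              (fun a b => (a < b ∧ ¬(a < p0 ∧ p0 < b)) ∨ (p0 < a ∧ b < p0)) := by
            constructor
            intro a b h1 h2
            rcases h1 with ⟨g1, g2⟩ | ⟨g1, g2⟩ <;> rcases h2 with ⟨f1, f2⟩ | ⟨f1, f2⟩ <;> omega
          refine List.Perm.eq_of_pairwise' (r := fun a b =>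
              (a < b ∧ ¬(a < p0 ∧ p0 < b)) ∨ (p0 < a ∧ b < p0)) ?_ ?_ hperm_t
          · exact hpw.imp (fun {a b} h =>
              h.1.elim (fun h1 => Or.inl ⟨h1, h.2⟩) Or.inr)
          · exact (pairwiseBS p0 (m+2)).imp (fun {a b} h =>
              h.1.elim (fun h1 => Or.inl ⟨h1, h.2⟩) Or.inr)
        show p0 :: 1 :: t = tailP p0 (m+2)
        rw [hEq]
        rfl
  · intro h
    rcases h with (⟨l, hl, rfl⟩ | ⟨l, hl, rfl⟩) | ⟨x, hx3, hxn, rfl⟩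
    · exact (mem_ins1 (m+1) l).mpr hl
    · exact (mem_ins2 m l).mpr hl
    · exact tail_mem x (m+2) hx3 hxn

end StepLemma

section Count
open List

lemma finA (n : ℕ) : (Aset n).Finite := by
  apply Set.Finite.subset (List.finite_toSet (List.range' 1 n).permutations)
  intro l hl
  exact List.mem_permutations.mpr (memA.mp hl).1

lemma not_contains_short (l p : List ℕ) (h : l.length < p.length) : ¬ SeqContains l p := by
  rintro ⟨γ, hs, hl, _⟩
  have := hs.length_le
  omega

lemma fish_short (l : List ℕ) (h : l.length ≤ 2) : ¬ HasFishburnCopy l := by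
  rintro ⟨j, k, h1, h2, _, _⟩
  omega

lemma A0 : Aset 0 = {[]} := by
  ext l
  rw [memA]
  constructor
  · rintro ⟨h, -⟩
    exact List.perm_nil.mp h
  · rintro rfl
    exact ⟨List.Perm.refl _, fish_short _ (by simp),
      not_contains_short _ _ (by simp), not_contains_short _ _ (by simp)⟩

lemma A1 : Aset 1 = {[1]} := by
  ext l
  rw [memA]
  constructor
  · rintro ⟨h, -⟩
    exact List.perm_singleton.mp h
  · rintro rfl
    exact ⟨List.Perm.refl _, fish_short _ (by simp),
      not_contains_short _ _ (by simp), not_contains_short _ _ (by simp)⟩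

lemma card_step (m : ℕ) : (Aset (m+2)).ncard = (Aset (m+1)).ncard + (Aset m).ncard + m := by
  have hS3 : {l | ∃ x, 3 ≤ x ∧ x ≤ m+2 ∧ l = tailP x (m+2)} =
      (fun x => tailP x (m+2)) '' ↑(Finset.Icc 3 (m+2)) := by
    ext l
    simp only [Set.mem_setOf_eq, Set.mem_image, Finset.coe_Icc, Set.mem_Icc]
    constructor
    · rintro ⟨x, h1, h2, rfl⟩; exact ⟨x, ⟨h1, h2⟩, rfl⟩
    · rintro ⟨x, ⟨h1, h2⟩, rfl⟩; exact ⟨x, h1, h2, rfl⟩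
  have hinj1 : Function.Injective (fun l : List ℕ => 1 :: l.map (· + 1)) := by
    intro a b h
    simp only [List.cons.injEq] at h
    exact List.map_injective_iff.mpr (fun x y hxy => by omega) h.2
  have hinj2 : Function.Injective (fun l : List ℕ => 2 :: 1 :: l.map (· + 2)) := by
    intro a b h
    simp only [List.cons.injEq] at h
    exact List.map_injective_iff.mpr (fun x y hxy => by omega) h.2.2
  have hinj3 : Function.Injective (fun x => tailP x (m+2)) := by
    intro a b h
    simp only [tailP, List.cons.injEq] at h
    exact h.1
  have hfin1 : ((fun l : List ℕ => 1 :: l.map (· + 1)) '' Aset (m+1)).Finite :=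
    (finA (m+1)).image _
  have hfin2 : ((fun l : List ℕ => 2 :: 1 :: l.map (· + 2)) '' Aset m).Finite :=
    (finA m).image _
  have hfin3 : ({l | ∃ x, 3 ≤ x ∧ x ≤ m+2 ∧ l = tailP x (m+2)} : Set (List ℕ)).Finite := by
    rw [hS3]; exact (Finset.Icc 3 (m+2)).finite_toSet.image _
  have hd12 : Disjoint ((fun l : List ℕ => 1 :: l.map (· + 1)) '' Aset (m+1))
      ((fun l : List ℕ => 2 :: 1 :: l.map (· + 2)) '' Aset m) := by
    rw [Set.disjoint_left]
    rintro a ⟨l, _, rfl⟩ ⟨l', _, hl'⟩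
    simp only [List.cons.injEq] at hl'
    omega
  have hd3 : Disjoint ((fun l : List ℕ => 1 :: l.map (· + 1)) '' Aset (m+1) ∪
      (fun l : List ℕ => 2 :: 1 :: l.map (· + 2)) '' Aset m)
      {l | ∃ x, 3 ≤ x ∧ x ≤ m+2 ∧ l = tailP x (m+2)} := by
    rw [Set.disjoint_left]
    rintro a (⟨l, _, rfl⟩ | ⟨l, _, rfl⟩) ⟨x, hx1, hx2, hx3⟩ <;>
      · rw [tailP] at hx3
        simp only [List.cons.injEq] at hx3
        omega
  rw [step m, Set.ncard_union_eq hd3 (hfin1.union hfin2) hfin3,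
    Set.ncard_union_eq hd12 hfin1 hfin2,
    Set.ncard_image_of_injective _ hinj1, Set.ncard_image_of_injective _ hinj2,
    hS3, Set.ncard_image_of_injective _ hinj3, Set.ncard_coe_finset, Nat.card_Icc]
  omega

theorem fib_pos : ∀ n, 1 ≤ paperFib n
  | 0 => le_refl 1
  | 1 => le_refl 1
  | (n+2) => by
    have := fib_pos (n+1)
    rw [show paperFib (n+2) = paperFib (n+1) + paperFib n from rfl]
    omega

theorem fib_ge : ∀ n, n + 1 ≤ paperFib (n+2)
  | 0 => by norm_num [paperFib]
  | (n+1) => by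
    have h1 := fib_ge n
    have h2 := fib_pos (n+1)
    rw [show paperFib (n+1+2) = paperFib (n+2) + paperFib (n+1) from rfl]
    omega

end Count

/-- For all `n ≥ 0`, `|F_n(321, 3124)| = F_{n+2} - n - 1`, where `F` denotes the
Fibonacci numbers with `F_0 = F_1 = 1`. -/
theorem stmt16 (n : ℕ) :
    (FishburnSet n [[3, 2, 1], [3, 1, 2, 4]]).ncard = paperFib (n + 2) - n - 1 := by
  induction n using Nat.strong_induction_on with
  | _ n ih =>
    match n with
    | 0 =>
      show (Aset 0).ncard = paperFib 2 - 0 - 1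
      rw [A0, Set.ncard_singleton]
      decide
    | 1 =>
      show (Aset 1).ncard = paperFib 3 - 1 - 1
      rw [A1, Set.ncard_singleton]
      decide
    | (m+2) =>
      have h1 := ih (m+1) (by omega)
      have h2 := ih m (by omega)
      show (Aset (m+2)).ncard = paperFib (m+2+2) - (m+2) - 1
      rw [card_step m]
      have e1 : (FishburnSet (m+1) [[3, 2, 1], [3, 1, 2, 4]]).ncard = (Aset (m+1)).ncard := rfl
      have e2 : (FishburnSet m [[3, 2, 1], [3, 1, 2, 4]]).ncard = (Aset m).ncard := rfl
      rw [e1] at h1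
      rw [e2] at h2
      rw [h1, h2]
      have f1 := fib_ge (m+1)
      have f2 := fib_ge m
      have f0 := fib_pos (m+1)
      have g1 : paperFib (m+1+2) = paperFib (m+2) + paperFib (m+1) := rfl
      have g2 : paperFib (m+2+2) = paperFib (m+1+2) + paperFib (m+2) := by
        rw [g1]; rfl
      omega
end
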